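/- Let A and B be ℚ-multiplicity tree automata over Σ with total dimension n. Then A and B are equivalent if and only if Σ_{t ∈ T_Σ, height(t) < n} (‖A×A‖(t) + ‖B×B‖(t) − 2·‖A×B‖(t)) = 0. -/

import Mathlib

/-- Σ-trees over a ranked alphabet. -/
inductive RTree (Sig : Type) (rk : Sig → ℕ) : Type
  | node (σ : Sig) (ts : Fin (rk σ) → RTree Sig rk) : RTree Sig rk

/-- Extension of the tree representation `μ` to trees. -/
def mtaRun {Sig : Type} {rk : Sig → ℕ} {F : Type} [Field F] {S : Type} [Fintype S]
    (μ : ∀ σ : Sig, Matrix (Fin (rk σ) → S) S F) : RTree Sig rk → S → F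
  | .node σ ts => Matrix.vecMul (fun i => ∏ l, mtaRun μ (ts l) (i l)) (μ σ)

/-- The tree series recognised by an MTA: `‖A‖(t) = μ(t) · γ`. -/
def mtaWeight {Sig : Type} {rk : Sig → ℕ} {F : Type} [Field F] {S : Type} [Fintype S]
    (μ : ∀ σ : Sig, Matrix (Fin (rk σ) → S) S F) (γ : S → F) (t : RTree Sig rk) : F :=
  ∑ s, mtaRun μ t s * γ s

/-- Transition matrices of the product automaton, `μ(σ) = P_k · (μ₁(σ) ⊗ μ₂(σ))`
with the permutation `P_k` realised intrinsically on tuple row indices. -/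
def prodμ {Sig : Type} {rk : Sig → ℕ} {F : Type} [Field F] {S₁ S₂ : Type}
    (μ₁ : ∀ σ : Sig, Matrix (Fin (rk σ) → S₁) S₁ F)
    (μ₂ : ∀ σ : Sig, Matrix (Fin (rk σ) → S₂) S₂ F) :
    ∀ σ : Sig, Matrix (Fin (rk σ) → S₁ × S₂) (S₁ × S₂) F :=
  fun σ => fun i s => μ₁ σ (fun l => (i l).1) s.1 * μ₂ σ (fun l => (i l).2) s.2

/-- Height of a Σ-tree. -/
def height {Sig : Type} {rk : Sig → ℕ} : RTree Sig rk → ℕ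
  | .node _ ts => Finset.univ.sup fun l => height (ts l) + 1

section Aux

variable {Sig : Type} {rk : Sig → ℕ}

theorem mtaRun_prodμ {F : Type} [Field F] {S₁ S₂ : Type} [Fintype S₁] [Fintype S₂]
    (μ₁ : ∀ σ : Sig, Matrix (Fin (rk σ) → S₁) S₁ F)
    (μ₂ : ∀ σ : Sig, Matrix (Fin (rk σ) → S₂) S₂ F)
    (t : RTree Sig rk) (s : S₁ × S₂) :
    mtaRun (prodμ μ₁ μ₂) t s = mtaRun μ₁ t s.1 * mtaRun μ₂ t s.2 := by
  induction t generalizing s with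
  | node σ ts ih =>
    simp only [mtaRun, Matrix.vecMul, dotProduct, prodμ]
    rw [Finset.sum_mul_sum,
      ← Equiv.sum_comp (Equiv.arrowProdEquivProdArrow (Fin (rk σ)) (fun _ => S₁) (fun _ => S₂)).symm]
    rw [Fintype.sum_prod_type]
    refine Finset.sum_congr rfl fun i _ => Finset.sum_congr rfl fun j _ => ?_
    simp only [Equiv.arrowProdEquivProdArrow, Equiv.coe_fn_symm_mk, ih, Finset.prod_mul_distrib]
    ring

theorem mtaWeight_prodμ {F : Type} [Field F] {S₁ S₂ : Type} [Fintype S₁] [Fintype S₂]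
    (μ₁ : ∀ σ : Sig, Matrix (Fin (rk σ) → S₁) S₁ F) (γ₁ : S₁ → F)
    (μ₂ : ∀ σ : Sig, Matrix (Fin (rk σ) → S₂) S₂ F) (γ₂ : S₂ → F)
    (t : RTree Sig rk) :
    mtaWeight (prodμ μ₁ μ₂) (fun s => γ₁ s.1 * γ₂ s.2) t =
      mtaWeight μ₁ γ₁ t * mtaWeight μ₂ γ₂ t := by
  simp only [mtaWeight, mtaRun_prodμ]
  rw [Finset.sum_mul_sum, Fintype.sum_prod_type]
  exact Finset.sum_congr rfl fun s₁ _ => Finset.sum_congr rfl fun s₂ _ => by ring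

theorem height_child_lt {σ : Sig} {ts : Fin (rk σ) → RTree Sig rk} {m : ℕ}
    (h : height (RTree.node σ ts) < m) (l : Fin (rk σ)) : height (ts l) + 1 < m := by
  have h1 : height (ts l) + 1 ≤ Finset.univ.sup (fun l => height (ts l) + 1) :=
    Finset.le_sup (f := fun l => height (ts l) + 1) (Finset.mem_univ l)
  have h2 : height (RTree.node σ ts) = Finset.univ.sup fun l => height (ts l) + 1 := rfl
  omega

theorem finite_height_lt [Fintype Sig] : ∀ m : ℕ, {t : RTree Sig rk | height t < m}.Finite
  | 0 => Set.Finite.subset (Set.finite_empty) (by intro t ht; simp only [Set.mem_setOf_eq] at ht; omega)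
  | (m + 1) => by
    have IH := finite_height_lt m
    have hsub : {t : RTree Sig rk | height t < m + 1} ⊆
        ⋃ σ : Sig, (fun ts => RTree.node σ ts) ''
          (Set.univ.pi fun _ : Fin (rk σ) => {u : RTree Sig rk | height u < m}) := by
      rintro ⟨σ, ts⟩ ht
      refine Set.mem_iUnion.2 ⟨σ, ⟨ts, fun l _ => ?_, rfl⟩⟩
      have := height_child_lt (show height (RTree.node σ ts) < m + 1 from ht) l
      simp only [Set.mem_setOf_eq]; omega
    exact Set.Finite.subset
      (Set.finite_iUnion fun σ => (Set.Finite.pi fun _ => IH).image _) hsub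

/-- A multilinear map sends tuples of span members into the span of its values on the set. -/
theorem multilinear_mem_span {ι : Type} [Fintype ι] [DecidableEq ι] {M N : Type}
    [AddCommGroup M] [Module ℚ M] [AddCommGroup N] [Module ℚ N]
    (f : MultilinearMap ℚ (fun _ : ι => M) N) (s : Set M) (x : ι → M)
    (h : ∀ i, x i ∈ Submodule.span ℚ s) :
    f x ∈ Submodule.span ℚ {y | ∃ g : ι → M, (∀ i, g i ∈ s) ∧ f g = y} := by
  choose c hsup hsum using fun i => Submodule.mem_span_set.1 (h i)
  have hx : x = fun i => ∑ m ∈ (c i).support, c i m • m := by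
    funext i; rw [← hsum i]; rfl
  rw [hx, MultilinearMap.map_sum_finset]
  refine Submodule.sum_mem _ fun r hr => ?_
  rw [MultilinearMap.map_smul_univ]
  refine Submodule.smul_mem _ _ (Submodule.subset_span ?_)
  exact ⟨r, fun i => hsup i (Finset.mem_coe.2 (Fintype.mem_piFinset.1 hr i)), rfl⟩

variable {n₁ n₂ : ℕ}
  (μ₁ : ∀ σ : Sig, Matrix (Fin (rk σ) → Fin n₁) (Fin n₁) ℚ)
  (μ₂ : ∀ σ : Sig, Matrix (Fin (rk σ) → Fin n₂) (Fin n₂) ℚ)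

/-- The state space of the combined automaton. -/
abbrev MtaV (n₁ n₂ : ℕ) : Type := (Fin n₁ → ℚ) × (Fin n₂ → ℚ)

/-- The pair of run vectors of a tree. -/
def mtaVec (t : RTree Sig rk) : MtaV n₁ n₂ := (mtaRun μ₁ t, mtaRun μ₂ t)

/-- One-step transition as a multilinear map on pairs of run vectors. -/
def runML (σ : Sig) : MultilinearMap ℚ (fun _ : Fin (rk σ) => MtaV n₁ n₂) (MtaV n₁ n₂) :=
  (MultilinearMap.pi fun s : Fin n₁ =>
      ∑ i : Fin (rk σ) → Fin n₁, μ₁ σ i s •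
        ((MultilinearMap.mkPiAlgebra ℚ (Fin (rk σ)) ℚ).compLinearMap
          fun l => (LinearMap.proj (i l)).comp (LinearMap.fst ℚ _ _))).prod
  (MultilinearMap.pi fun s : Fin n₂ =>
      ∑ i : Fin (rk σ) → Fin n₂, μ₂ σ i s •
        ((MultilinearMap.mkPiAlgebra ℚ (Fin (rk σ)) ℚ).compLinearMap
          fun l => (LinearMap.proj (i l)).comp (LinearMap.snd ℚ _ _)))

theorem runML_apply (σ : Sig) (w : Fin (rk σ) → MtaV n₁ n₂) :
    runML μ₁ μ₂ σ w =
      ((fun s => ∑ i : Fin (rk σ) → Fin n₁, (∏ l, (w l).1 (i l)) * μ₁ σ i s),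
       (fun s => ∑ i : Fin (rk σ) → Fin n₂, (∏ l, (w l).2 (i l)) * μ₂ σ i s)) := by
  refine Prod.ext ?_ ?_ <;> funext s <;>
    simp only [runML, MultilinearMap.prod_apply, MultilinearMap.pi_apply,
      MultilinearMap.sum_apply, MultilinearMap.smul_apply,
      MultilinearMap.compLinearMap_apply, MultilinearMap.mkPiAlgebra_apply,
      LinearMap.comp_apply, LinearMap.proj_apply, LinearMap.fst_apply, LinearMap.snd_apply,
      smul_eq_mul] <;>
    exact Finset.sum_congr rfl fun i _ => mul_comm _ _

theorem mtaVec_node (σ : Sig) (ts : Fin (rk σ) → RTree Sig rk) :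
    mtaVec μ₁ μ₂ (.node σ ts) = runML μ₁ μ₂ σ (fun l => mtaVec μ₁ μ₂ (ts l)) := by
  rw [runML_apply]
  rfl

/-- The span of the run vectors of trees of height `< h`. -/
def mtaW (h : ℕ) : Submodule ℚ (MtaV n₁ n₂) :=
  Submodule.span ℚ (mtaVec μ₁ μ₂ '' {t : RTree Sig rk | height t < h})

theorem mtaW_mono : Monotone (mtaW μ₁ μ₂) := fun a b hab =>
  Submodule.span_mono (Set.image_mono fun t ht => lt_of_lt_of_le ht hab)

theorem mtaVec_mem_mtaW (t : RTree Sig rk) : mtaVec μ₁ μ₂ t ∈ mtaW μ₁ μ₂ (height t + 1) :=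
  Submodule.subset_span ⟨t, Nat.lt_succ_self _, rfl⟩

theorem mtaW_step {h : ℕ} (hle : mtaW μ₁ μ₂ (h + 1) ≤ mtaW μ₁ μ₂ h) :
    mtaW μ₁ μ₂ (h + 2) ≤ mtaW μ₁ μ₂ (h + 1) := by
  rw [mtaW, Submodule.span_le]
  rintro _ ⟨t, ht, rfl⟩
  obtain ⟨σ, ts⟩ := t
  have hts : ∀ l, height (ts l) < h + 1 := fun l => by
    have := height_child_lt (show height (RTree.node σ ts) < h + 2 from ht) l; omega
  have hmem : ∀ l, mtaVec μ₁ μ₂ (ts l) ∈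
      Submodule.span ℚ (mtaVec μ₁ μ₂ '' {u : RTree Sig rk | height u < h}) := fun l =>
    hle (mtaW_mono μ₁ μ₂ (Nat.succ_le_of_lt (hts l)) (mtaVec_mem_mtaW μ₁ μ₂ (ts l)))
  rw [mtaVec_node]
  have hspan := multilinear_mem_span (runML μ₁ μ₂ σ) _ _ hmem
  refine Submodule.span_le.2 ?_ hspan
  rintro _ ⟨g, hg, rfl⟩
  choose u hu hvu using fun l => hg l
  have hgu : g = fun l => mtaVec μ₁ μ₂ (u l) := by funext l; rw [hvu l]
  rw [hgu, ← mtaVec_node]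
  refine Submodule.subset_span ⟨RTree.node σ u, ?_, rfl⟩
  simp only [Set.mem_setOf_eq, height]
  refine Finset.sup_lt_iff (show (⊥ : ℕ) < h + 1 by rw [Nat.bot_eq_zero]; omega) |>.2 fun l _ => ?_
  have := hu l
  simp only [Set.mem_setOf_eq] at this
  omega

theorem mtaW_le_final : ∀ m, mtaW μ₁ μ₂ m ≤ mtaW μ₁ μ₂ (n₁ + n₂) := by
  by_cases hex : ∃ h, h < n₁ + n₂ ∧ mtaW μ₁ μ₂ (h + 1) ≤ mtaW μ₁ μ₂ h
  · obtain ⟨h, hn, hle⟩ := hex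
    have haux : ∀ k, mtaW μ₁ μ₂ (h + k + 1) ≤ mtaW μ₁ μ₂ (h + k) := by
      intro k; induction k with
      | zero => exact hle
      | succ k ih =>
        have := mtaW_step μ₁ μ₂ ih
        have e1 : h + k + 2 = h + (k + 1) + 1 := by omega
        have e2 : h + k + 1 = h + (k + 1) := by omega
        rwa [e1, e2] at this
    have hstab : ∀ k, mtaW μ₁ μ₂ (h + k) ≤ mtaW μ₁ μ₂ h := by
      intro k; induction k with
      | zero => exact le_rfl
      | succ k ih => exact le_trans (haux k) ih
    intro m
    rcases le_or_gt m h with hm | hm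
    · exact mtaW_mono μ₁ μ₂ (le_trans hm (le_of_lt hn))
    · have : m = h + (m - h) := by omega
      rw [this]
      exact le_trans (hstab (m - h)) (mtaW_mono μ₁ μ₂ (le_of_lt hn))
  · push_neg at hex
    have hstrict : ∀ h, h < n₁ + n₂ → mtaW μ₁ μ₂ h < mtaW μ₁ μ₂ (h + 1) := fun h hh =>
      lt_of_le_not_ge (mtaW_mono μ₁ μ₂ (Nat.le_succ h)) (hex h hh)
    have hrank : ∀ h, h ≤ n₁ + n₂ → h ≤ Module.finrank ℚ (mtaW μ₁ μ₂ h) := by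
      intro h; induction h with
      | zero => intro _; exact Nat.zero_le _
      | succ h ih =>
        intro hh
        have h1 := ih (by omega)
        have h2 := Submodule.finrank_lt_finrank_of_lt (hstrict h (by omega))
        omega
    have hdim : Module.finrank ℚ (MtaV n₁ n₂) = n₁ + n₂ := by
      simp [MtaV, Module.finrank_prod, Module.finrank_fin_fun]
    have hr1 : Module.finrank ℚ (mtaW μ₁ μ₂ (n₁ + n₂)) = n₁ + n₂ :=
      le_antisymm (le_trans (Submodule.finrank_le _) (le_of_eq hdim)) (hrank _ le_rfl)
    have htop : mtaW μ₁ μ₂ (n₁ + n₂) = ⊤ :=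
      Submodule.eq_top_of_finrank_eq (hr1.trans hdim.symm)
    intro m; rw [htop]; exact le_top

/-- The difference functional. -/
def mtaφ (γ₁ : Fin n₁ → ℚ) (γ₂ : Fin n₂ → ℚ) : MtaV n₁ n₂ →ₗ[ℚ] ℚ where
  toFun x := (∑ s, x.1 s * γ₁ s) - ∑ s, x.2 s * γ₂ s
  map_add' x y := by
    simp only [Prod.fst_add, Prod.snd_add, Pi.add_apply, add_mul, Finset.sum_add_distrib]
    ring
  map_smul' c x := by
    simp only [Prod.smul_fst, Prod.smul_snd, Pi.smul_apply, smul_eq_mul, RingHom.id_apply,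
      Finset.mul_sum, mul_assoc, mul_sub]

theorem mtaφ_vec (γ₁ : Fin n₁ → ℚ) (γ₂ : Fin n₂ → ℚ) (t : RTree Sig rk) :
    mtaφ γ₁ γ₂ (mtaVec μ₁ μ₂ t) = mtaWeight μ₁ γ₁ t - mtaWeight μ₂ γ₂ t := rfl

theorem agree_of_agree_lt (γ₁ : Fin n₁ → ℚ) (γ₂ : Fin n₂ → ℚ)
    (hagree : ∀ t : RTree Sig rk, height t < n₁ + n₂ →
      mtaWeight μ₁ γ₁ t = mtaWeight μ₂ γ₂ t) :
    ∀ t : RTree Sig rk, mtaWeight μ₁ γ₁ t = mtaWeight μ₂ γ₂ t := by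
  have hW : ∀ x ∈ mtaW μ₁ μ₂ (n₁ + n₂), mtaφ γ₁ γ₂ x = 0 := by
    intro x hx
    refine Submodule.span_induction (fun y hy => ?_) (map_zero _)
      (fun a b _ _ ha hb => by rw [map_add, ha, hb, add_zero])
      (fun c y _ hy => by rw [map_smul, hy, smul_zero]) hx
    obtain ⟨t, ht, rfl⟩ := hy
    rw [mtaφ_vec, hagree t ht, sub_self]
  intro t
  have h0 := hW _ (mtaW_le_final μ₁ μ₂ (height t + 1) (mtaVec_mem_mtaW μ₁ μ₂ t))
  rw [mtaφ_vec] at h0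
  linarith

end Aux

/-- ℚ-MTAs `A`, `B` of total dimension `n = n₁ + n₂` are
equivalent iff `Σ_{height(t) < n} (‖A×A‖(t) + ‖B×B‖(t) − 2‖A×B‖(t)) = 0`. -/
theorem mta_equiv_iff_sum_eq_zero {Sig : Type} [Fintype Sig] {rk : Sig → ℕ}
    {n₁ n₂ : ℕ}
    (μ₁ : ∀ σ : Sig, Matrix (Fin (rk σ) → Fin n₁) (Fin n₁) ℚ) (γ₁ : Fin n₁ → ℚ)
    (μ₂ : ∀ σ : Sig, Matrix (Fin (rk σ) → Fin n₂) (Fin n₂) ℚ) (γ₂ : Fin n₂ → ℚ) :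
    (∀ t : RTree Sig rk, mtaWeight μ₁ γ₁ t = mtaWeight μ₂ γ₂ t) ↔
      (∑ᶠ t ∈ {t : RTree Sig rk | height t < n₁ + n₂},
        (mtaWeight (prodμ μ₁ μ₁) (fun s => γ₁ s.1 * γ₁ s.2) t +
         mtaWeight (prodμ μ₂ μ₂) (fun s => γ₂ s.1 * γ₂ s.2) t -
         2 * mtaWeight (prodμ μ₁ μ₂) (fun s => γ₁ s.1 * γ₂ s.2) t)) = 0 := by
  have hfin := finite_height_lt (Sig := Sig) (rk := rk) (n₁ + n₂)
  have hterm : ∀ t : RTree Sig rk,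
      (mtaWeight (prodμ μ₁ μ₁) (fun s => γ₁ s.1 * γ₁ s.2) t +
       mtaWeight (prodμ μ₂ μ₂) (fun s => γ₂ s.1 * γ₂ s.2) t -
       2 * mtaWeight (prodμ μ₁ μ₂) (fun s => γ₁ s.1 * γ₂ s.2) t) =
      (mtaWeight μ₁ γ₁ t - mtaWeight μ₂ γ₂ t) ^ 2 := by
    intro t
    rw [mtaWeight_prodμ, mtaWeight_prodμ, mtaWeight_prodμ]
    ring
  rw [finsum_mem_eq_finite_toFinset_sum _ hfin]
  constructor
  · intro h
    refine Finset.sum_eq_zero fun t _ => ?_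
    rw [hterm, h t, sub_self]
    ring
  · intro h
    refine agree_of_agree_lt μ₁ μ₂ γ₁ γ₂ (fun u hu => ?_)
    have h0 := (Finset.sum_eq_zero_iff_of_nonneg fun u _ => by
      rw [hterm]; positivity).1 h u (by rwa [Set.Finite.mem_toFinset])
    rw [hterm] at h0
    have := pow_eq_zero_iff (n := 2) (by norm_num) |>.1 h0
    linarith
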